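/- Every direct summand of a Baer module is Baer, and every direct summand of a dual Baer module is dual Baer. -/

import Mathlib

universe u v

/-- `M` is a Baer module: the common kernel of any set of endomorphisms
is a direct summand of `M`. -/
def IsBaerModule (R : Type u) [Ring R] (M : Type v) [AddCommGroup M]
    [Module R M] : Prop :=
  ∀ X : Set (Module.End R M), ∃ p : Submodule R M,
    IsCompl (⨅ f ∈ X, LinearMap.ker f) p

/-- `M` is a dual Baer module: for every submodule `N` of `M`, the right ideal
`Hom(M,N)` of `End(M)` is generated by an idempotent. -/
def IsDualBaerModule (R : Type u) [Ring R] (M : Type v) [AddCommGroup M]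
    [Module R M] : Prop :=
  ∀ N : Submodule R M, ∃ e : Module.End R M, IsIdempotentElem e ∧
    {f : Module.End R M | LinearMap.range f ≤ N} = Set.range fun s => e * s

theorem stmt8 (R : Type u) [Ring R] (M : Type v) [AddCommGroup M] [Module R M]
    (N : Submodule R M) (hN : ∃ p : Submodule R M, IsCompl N p) :
    (IsBaerModule R M → IsBaerModule R N) ∧
    (IsDualBaerModule R M → IsDualBaerModule R N) := by
  obtain ⟨p, hp⟩ := hN
  set ι : ↥N →ₗ[R] M := N.subtype with hι
  set π : M →ₗ[R] ↥N := N.linearProjOfIsCompl p hp with hπ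
  have hfix : ∀ x ∈ N, (↑(π x) : M) = x := fun x hx =>
    congrArg Subtype.val (Submodule.linearProjOfIsCompl_apply_left hp ⟨x, hx⟩)
  have hπι : ∀ n : ↥N, π (ι n) = n := fun n =>
    Submodule.linearProjOfIsCompl_apply_left hp n
  have hπι' : ∀ n : ↥N, π (↑n : M) = n := fun n =>
    Submodule.linearProjOfIsCompl_apply_left hp n
  constructor
  · intro hB X
    obtain ⟨q, hq⟩ := hB ((fun f : Module.End R ↥N => ι ∘ₗ f ∘ₗ π) '' X)
    have hker : (⨅ g ∈ ((fun f : Module.End R ↥N => ι ∘ₗ f ∘ₗ π) '' X),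
        LinearMap.ker g) = Submodule.comap π (⨅ f ∈ X, LinearMap.ker f) := by
      ext x
      simp only [Submodule.mem_iInf, LinearMap.mem_ker, Submodule.mem_comap,
        Set.mem_image, forall_exists_index, and_imp]
      constructor
      · intro h f hf
        have := h (ι ∘ₗ f ∘ₗ π) f hf rfl
        simpa [hι, Submodule.coe_eq_zero] using this
      · intro h g f hf hg
        subst hg
        simpa [hι, Submodule.coe_eq_zero] using h f hf
    rw [hker] at hq
    refine ⟨Submodule.comap ι (p ⊔ q), ?_, ?_⟩
    · -- disjoint
      rw [Submodule.disjoint_def]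
      intro n hnK hnC
      have hmem : (↑n : M) ∈ p ⊔ q := hnC
      obtain ⟨a, ha, b, hb, hab⟩ := Submodule.mem_sup.mp hmem
      have hbK : b ∈ Submodule.comap π (⨅ f ∈ X, LinearMap.ker f) := by
        have hπb : π b = n := by
          have hb' : b = (↑n : M) - a := by rw [← hab]; abel
          rw [hb', map_sub]
          have hπa : π a = 0 := Submodule.linearProjOfIsCompl_apply_right' hp ha
          rw [hπa, hπι' n, sub_zero]
        simpa [hπb] using hnK
      have hb0 : b = 0 := by
        have hd := hq.disjoint
        rw [Submodule.disjoint_def] at hd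
        exact hd b hbK hb
      have hna : (↑n : M) = a := by rw [← hab, hb0, add_zero]
      have hn0 : (↑n : M) = 0 := by
        have hd := hp.disjoint
        rw [Submodule.disjoint_def] at hd
        exact hd ↑n n.2 (hna ▸ ha)
      exact Subtype.ext hn0
    · -- codisjoint
      rw [codisjoint_iff, eq_top_iff]
      intro n _
      have hmem : (↑n : M) ∈ Submodule.comap π (⨅ f ∈ X, LinearMap.ker f) ⊔ q := by
        rw [hq.codisjoint.eq_top]; trivial
      obtain ⟨a, ha, b, hb, hab⟩ := Submodule.mem_sup.mp hmem
      refine Submodule.mem_sup.mpr ⟨π a, ha, n - π a, ?_, by abel⟩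
      show (↑(n - π a) : M) ∈ p ⊔ q
      have hap : a - ↑(π a) ∈ p := by
        have h0 : π (a - ↑(π a)) = 0 := by
          rw [map_sub, hπι' (π a), sub_self]
        exact (Submodule.linearProjOfIsCompl_apply_eq_zero_iff hp).mp h0
      have heq : (↑(n - π a) : M) = (a - ↑(π a)) + b := by
        push_cast
        rw [← hab]; abel
      rw [heq]
      exact Submodule.add_mem_sup hap hb
  · intro hD L
    obtain ⟨e, he, hset⟩ := hD (L.map ι)
    have he_mem : LinearMap.range e ≤ L.map ι := by
      have h1 : e ∈ {f : Module.End R M | LinearMap.range f ≤ L.map ι} := by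
        rw [hset]; exact ⟨e, he⟩
      exact h1
    have he2 : ∀ x : M, e (e x) = e x := fun x => by
      have := DFunLike.congr_fun he x
      simpa [Module.End.mul_apply] using this
    have hrangeN : ∀ x : M, e x ∈ N := fun x =>
      (he_mem.trans (Submodule.map_subtype_le N L)) (LinearMap.mem_range_self e x)
    have hefix : ∀ x : M, (↑(π (e x)) : M) = e x := fun x => hfix _ (hrangeN x)
    refine ⟨π ∘ₗ e ∘ₗ ι, ?_, ?_⟩
    · ext n
      simp only [Module.End.mul_apply, LinearMap.comp_apply, hι, Submodule.subtype_apply,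
        hefix, he2]
    · ext f
      simp only [Set.mem_setOf_eq, Set.mem_range]
      constructor
      · intro hf
        set F : Module.End R M := ι ∘ₗ f ∘ₗ π with hF
        have hFmem : F ∈ {g : Module.End R M | LinearMap.range g ≤ L.map ι} := by
          intro x hx
          obtain ⟨m, rfl⟩ := hx
          exact Submodule.mem_map.mpr ⟨f (π m), hf (LinearMap.mem_range_self f (π m)), rfl⟩
        rw [hset] at hFmem
        obtain ⟨S, hS⟩ := hFmem
        have heF : ∀ x : M, e (F x) = F x := by
          intro x
          have hx : F x = e (S x) := by rw [← hS]; rfl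
          rw [hx, he2]
        refine ⟨f, ?_⟩
        ext n
        simp only [Module.End.mul_apply, LinearMap.comp_apply, hι, Submodule.subtype_apply]
        have hFn : F (↑n : M) = ↑(f n) := by
          simp only [hF, LinearMap.comp_apply, hι, Submodule.subtype_apply, hπι' n]
        rw [← hFn, heF]
        exact hfix _ (hFn ▸ (f n).2)
      · rintro ⟨s, rfl⟩
        intro y hy
        obtain ⟨n, rfl⟩ := hy
        show π (e (ι (s n))) ∈ L
        obtain ⟨l, hlL, hl⟩ :=
          Submodule.mem_map.mp (he_mem (LinearMap.mem_range_self e (ι (s n))))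
        rw [← hl, hπι l]
        exact hlL
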